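/- Let l ≥ 2 and let λ be an l-core partition with quotient charges p_i = p_i(λ), 0 ≤ i ≤ l−1 (so ∑_i p_i = 0). Then for every 0 ≤ j ≤ l−1: ∑_{k∈ℤ} N_{kl−j}(λ) = (1/2)·∑_{i=0}^{l−1} p_i² + ∑_{i=l−j}^{l−1} p_i, where the second sum is empty when j = 0. Here ∑_{k∈ℤ} N_{kl−j}(λ) equals the number of boxes of λ whose content is congruent to −j modulo l. -/

import Mathlib

/-- A partition `λ = (λ_1 ≥ λ_2 ≥ ⋯)`: a non-increasing sequence of natural numbers with
finitely many nonzero terms.  Here `parts n` denotes `λ_{n+1}`. -/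
structure Partition' where
  parts : ℕ → ℕ
  antitone : ∀ ⦃m n : ℕ⦄, m ≤ n → parts n ≤ parts m
  eventually_zero : ∃ N : ℕ, ∀ n ≥ N, parts n = 0

namespace Partition'

/-- `|λ|`, the number of boxes of the Young diagram of `λ`. -/
noncomputable def size (lam : Partition') : ℕ := ∑ᶠ n, lam.parts n

/-- The Young diagram of `λ`: boxes `(m, n)` (column `m`, row `n`) with `m < λ_{n+1}`. -/
def cells (lam : Partition') : Set (ℕ × ℕ) := {c | c.1 < lam.parts c.2}

/-- Maya diagram of `λ`: `maya lam k` holds (bead value 1) iff `k ∉ {λ_m − m : m ≥ 1}`. -/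
def maya (lam : Partition') (k : ℤ) : Prop :=
  ¬ ∃ m : ℕ, k = (lam.parts m : ℤ) - ((m : ℤ) + 1)

/-- The conjugate partition's `(m+1)`-st part: `λ'_{m+1} = #{rows of length > m}`. -/
noncomputable def conjParts (lam : Partition') (m : ℕ) : ℕ :=
  {j : ℕ | m < lam.parts j}.ncard

/-- Hook length of the box `(m, n)`: `(λ_{n+1} − 1 − m) + (λ'_{m+1} − 1 − n) + 1`. -/
noncomputable def hookLength (lam : Partition') (m n : ℕ) : ℕ :=
  (lam.parts n - 1 - m) + (lam.conjParts m - 1 - n) + 1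

end Partition'

/-- `c` is the charge of the 0/1-sequence `μ`:
`#{k < c : μ k = 1} = #{k ≥ c : μ k = 0}` (both sets finite). -/
def IsCharge (μ : ℤ → Prop) (c : ℤ) : Prop :=
  {k : ℤ | k < c ∧ μ k}.Finite ∧ {k : ℤ | c ≤ k ∧ ¬ μ k}.Finite ∧
    {k : ℤ | k < c ∧ μ k}.ncard = {k : ℤ | c ≤ k ∧ ¬ μ k}.ncard

/-- The `i`-th quotient sequence of the Maya diagram of `λ`: `μ_i(k) = μ_λ(l·k + i)`. -/
def quotSeq (l : ℕ) (lam : Partition') (i : ℕ) : ℤ → Prop :=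
  fun k => lam.maya ((l : ℤ) * k + (i : ℕ))

/-- `Q` is the `l`-quotient of `λ` with quotient charges `p`: for each `i`, `p i` is the
charge of the `i`-th quotient sequence `μ_i` and `μ_{Q i}(k) = μ_i(k + p i)`. -/
def IsQuotientWith (l : ℕ) (lam : Partition') (p : Fin l → ℤ) (Q : Fin l → Partition') : Prop :=
  ∀ i : Fin l, IsCharge (quotSeq l lam i) (p i) ∧
    ∀ k : ℤ, (Q i).maya k ↔ quotSeq l lam i (k + p i)

/-- Two boxes are adjacent if they share an edge. -/
def Adj (a b : ℕ × ℕ) : Prop :=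
  (a.1 = b.1 ∧ (a.2 = b.2 + 1 ∨ b.2 = a.2 + 1)) ∨
    (a.2 = b.2 ∧ (a.1 = b.1 + 1 ∨ b.1 = a.1 + 1))

/-- A set of boxes is connected: any two of its boxes are joined by a path of
edge-adjacent boxes inside the set. -/
def ConnectedIn (H : Set (ℕ × ℕ)) : Prop :=
  ∀ x ∈ H, ∀ y ∈ H,
    Relation.ReflTransGen (fun a b => a ∈ H ∧ b ∈ H ∧ Adj a b) x y

/-- `H` contains a 2×2 square of boxes. -/
def HasSquare (H : Set (ℕ × ℕ)) : Prop :=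
  ∃ m n : ℕ, (m, n) ∈ H ∧ (m + 1, n) ∈ H ∧ (m, n + 1) ∈ H ∧ (m + 1, n + 1) ∈ H

/-- `H` is a rim hook of length `l` of `λ`: a connected set of `l` boxes of `λ`,
containing no 2×2 square, whose removal leaves the Young diagram of a partition. -/
def IsRimHook (l : ℕ) (lam : Partition') (H : Set (ℕ × ℕ)) : Prop :=
  H ⊆ lam.cells ∧ H.Finite ∧ H.ncard = l ∧ ConnectedIn H ∧ ¬ HasSquare H ∧
    ∃ mu : Partition', mu.cells = lam.cells \ H

/-- `μ` is obtained from `λ` by removing one rim hook of length `l`. -/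
def RemoveHook (l : ℕ) (lam mu : Partition') : Prop :=
  ∃ H : Set (ℕ × ℕ), IsRimHook l lam H ∧ mu.cells = lam.cells \ H

/-- `λ` is an `l`-core: it admits no rim hook of length `l`. -/
def IsLCore (l : ℕ) (lam : Partition') : Prop := ¬ ∃ H : Set (ℕ × ℕ), IsRimHook l lam H

/-- `c` is the `l`-core of `λ`: obtained from `λ` by repeatedly removing rim hooks of
length `l` until none remain. -/
def IsCoreOf (l : ℕ) (lam c : Partition') : Prop :=
  Relation.ReflTransGen (RemoveHook l) lam c ∧ IsLCore l c

/-- Number of boxes `(m,n)` of `λ` with content `m − n ≡ r (mod l)`. -/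
noncomputable def contentCount (l : ℕ) (lam : Partition') (r : ℤ) : ℕ :=
  {c : ℕ × ℕ | c ∈ lam.cells ∧ ((c.1 : ℤ) - (c.2 : ℤ)) ≡ r [ZMOD (l : ℤ)]}.ncard

/-- `N_d(λ)`: the number of boxes `(m,n)` of `λ` with content `m − n = d`. -/
noncomputable def diagCount (lam : Partition') (d : ℤ) : ℕ :=
  {c : ℕ × ℕ | c ∈ lam.cells ∧ ((c.1 : ℤ) - (c.2 : ℤ)) = d}.ncard

/-- `K` is the blended partition of the charges `p` and the `l`-tuple of partitions `R`:
`{p + K_m − m : m ≥ 1} = {l·(R_{i,m} − m + p_i) + i : 0 ≤ i ≤ l−1, m ≥ 1}` in `ℤ`. -/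
def IsBlended (l : ℕ) (p : Fin l → ℤ) (R : Fin l → Partition') (K : Partition') : Prop :=
  {k : ℤ | ∃ m : ℕ, k = (∑ i, p i) + (K.parts m : ℤ) - ((m : ℤ) + 1)} =
    {k : ℤ | ∃ i : Fin l, ∃ m : ℕ,
      k = (l : ℤ) * (((R i).parts m : ℤ) - ((m : ℤ) + 1) + p i) + (i : ℕ)}

/-! ### Auxiliary development -/

namespace Partition'

/-- The beta numbers of a partition. -/
noncomputable def beta (lam : Partition') (n : ℕ) : ℤ := (lam.parts n : ℤ) - ((n : ℤ) + 1)

lemma beta_anti (lam : Partition') {m n : ℕ} (h : m ≤ n) : lam.beta n ≤ lam.beta m := by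
  have := lam.antitone h
  unfold beta
  have : (lam.parts n : ℤ) ≤ lam.parts m := by exact_mod_cast this
  have : (m : ℤ) ≤ n := by exact_mod_cast h
  omega

lemma beta_step (lam : Partition') {m n : ℕ} (h : m ≤ n) :
    lam.beta n + n ≤ lam.beta m + m := by
  have := lam.antitone h
  unfold beta
  have : (lam.parts n : ℤ) ≤ lam.parts m := by exact_mod_cast this
  omega

lemma beta_strictAnti (lam : Partition') {m n : ℕ} (h : m < n) : lam.beta n < lam.beta m := by
  have h1 := lam.beta_step h.le
  have : (m : ℤ) < n := by exact_mod_cast h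
  omega

lemma beta_lower (lam : Partition') (n : ℕ) : -((n : ℤ) + 1) ≤ lam.beta n := by
  unfold beta
  have : (0:ℤ) ≤ lam.parts n := Int.natCast_nonneg _
  omega
lemma maya_iff (lam : Partition') (k : ℤ) : lam.maya k ↔ ∀ n : ℕ, k ≠ lam.beta n := by
  unfold maya beta
  push_neg
  rfl

end Partition'


/-- The parts of the partition obtained by a bead move. -/
def nuAux (parts : ℕ → ℕ) (n₀ n' t : ℕ) : ℕ → ℕ :=
  fun r => if r < n₀ then parts r else if r < n' then parts (r+1) - 1
    else if r = n' then t else parts r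

section NuAux

variable {parts : ℕ → ℕ} {n₀ n' t : ℕ}
variable (hanti : ∀ ⦃m n : ℕ⦄, m ≤ n → parts n ≤ parts m)
variable (hle : n₀ ≤ n') (h1 : parts (n'+1) ≤ t) (h2 : t < parts n')

lemma nuAux_lt_of_lt {r : ℕ} (hr : r < n₀) : nuAux parts n₀ n' t r = parts r := by
  simp [nuAux, hr]

lemma nuAux_mid {r : ℕ} (hr₀ : n₀ ≤ r) (hr : r < n') :
    nuAux parts n₀ n' t r = parts (r+1) - 1 := by
  simp [nuAux, hr, Nat.not_lt.2 hr₀]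

lemma nuAux_top (hle : n₀ ≤ n') : nuAux parts n₀ n' t n' = t := by
  simp [nuAux, Nat.not_lt.2 hle]

lemma nuAux_gt (hle : n₀ ≤ n') {r : ℕ} (hr : n' < r) : nuAux parts n₀ n' t r = parts r := by
  have h1 : ¬ r < n₀ := by omega
  have h2 : ¬ r < n' := by omega
  have h3 : ¬ r = n' := by omega
  simp [nuAux, h1, h2, h3]

include hanti hle h1 h2

lemma nuAux_le (r : ℕ) : nuAux parts n₀ n' t r ≤ parts r := by
  rcases lt_or_ge r n₀ with h | h
  · rw [nuAux_lt_of_lt h]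
  · rcases lt_or_ge r n' with h' | h'
    · rw [nuAux_mid h h']
      have := hanti (show r ≤ r + 1 by omega)
      omega
    · rcases Nat.lt_or_ge n' r with h'' | h''
      · rw [nuAux_gt hle h'']
      · have hr : r = n' := by omega
        subst hr
        rw [nuAux_top hle]
        omega

lemma nuAux_lt_parts {r : ℕ} (hr₀ : n₀ ≤ r) (hr : r ≤ n') :
    nuAux parts n₀ n' t r < parts r := by
  have hpn' : 1 ≤ parts n' := by omega
  rcases lt_or_ge r n' with h' | h'
  · rw [nuAux_mid hr₀ h']
    have ha := hanti (show r ≤ r + 1 by omega)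
    have hb : parts n' ≤ parts r := hanti (by omega)
    omega
  · have : r = n' := by omega
    subst this
    rw [nuAux_top hle]
    omega

lemma nuAux_succ_le (r : ℕ) : nuAux parts n₀ n' t (r+1) ≤ nuAux parts n₀ n' t r := by
  rcases lt_or_ge (r+1) n₀ with c | c
  · rw [nuAux_lt_of_lt (show r < n₀ by omega), nuAux_lt_of_lt c]
    exact hanti (show r ≤ r + 1 by omega)
  · rcases lt_or_ge r n₀ with c' | c'
    · rw [nuAux_lt_of_lt c']
      calc nuAux parts n₀ n' t (r+1) ≤ parts (r+1) := nuAux_le hanti hle h1 h2 (r+1)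
        _ ≤ parts r := hanti (show r ≤ r + 1 by omega)
    · rcases lt_or_ge (r+1) n' with d | d
      · rw [nuAux_mid c' (by omega), nuAux_mid (by omega) d]
        have h22 : r + 1 + 1 = r + 2 := by omega
        rw [h22]
        have := hanti (show r + 1 ≤ r + 2 by omega)
        omega
      · rcases Nat.lt_or_ge n' (r+1) with d' | d'
        · -- n' ≤ r
          rcases Nat.lt_or_ge n' r with e | e
          · rw [nuAux_gt hle e, nuAux_gt hle (by omega)]
            exact hanti (show r ≤ r + 1 by omega)
          · have : r = n' := by omega
            subst this
            rw [nuAux_top hle, nuAux_gt hle (by omega)]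
            exact h1
        · have hd : r + 1 = n' := by omega
          rw [nuAux_mid c' (by omega)]
          rw [hd, nuAux_top hle]
          omega

lemma nuAux_antitone : ∀ ⦃m n : ℕ⦄, m ≤ n →
    nuAux parts n₀ n' t n ≤ nuAux parts n₀ n' t m := by
  have := antitone_nat_of_succ_le (nuAux_succ_le hanti hle h1 h2)
  exact fun m n h => this h

end NuAux


lemma sum_Ico_telescope (g : ℕ → ℤ) {m n : ℕ} (h : m ≤ n) :
    ∑ r ∈ Finset.Ico m n, (g r - g (r+1)) = g m - g n := by
  induction n, h using Nat.le_induction with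
  | base => simp
  | succ n hmn ih => rw [Finset.sum_Ico_succ_top hmn, ih]; ring

lemma exists_rimhook {l : ℕ} (hl : 1 ≤ l) (lam : Partition') (n₀ : ℕ)
    (hnb : ∀ n : ℕ, lam.beta n₀ - (l : ℤ) ≠ lam.beta n) :
    ∃ H : Set (ℕ × ℕ), IsRimHook l lam H := by
  obtain ⟨R, hR⟩ := lam.eventually_zero
  have hlZ : (1 : ℤ) ≤ (l : ℤ) := by exact_mod_cast hl
  have hparts : ∀ n : ℕ, (lam.parts n : ℤ) = lam.beta n + n + 1 := by
    intro n; unfold Partition'.beta; ring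
  set b := lam.beta n₀ with hbdef
  have hPex : ∃ n : ℕ, lam.beta n < b - l := by
    refine ⟨R + ((l : ℤ) - b).toNat, ?_⟩
    have h0 : lam.parts (R + ((l:ℤ) - b).toNat) = 0 := hR _ (by omega)
    have h1 : ((l:ℤ) - b) ≤ (((l:ℤ) - b).toNat : ℤ) := Int.self_le_toNat _
    have h2 := hparts (R + ((l:ℤ) - b).toNat)
    rw [h0] at h2
    push_cast at h2
    omega
  have hfind : lam.beta (Nat.find hPex) < b - l := Nat.find_spec hPex
  have hn₀N : n₀ < Nat.find hPex := by
    rcases Nat.lt_or_ge n₀ (Nat.find hPex) with h | h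
    · exact h
    · exfalso
      have h2 := lam.beta_anti h
      omega
  set n' := Nat.find hPex - 1 with hn'def
  have hNn' : Nat.find hPex = n' + 1 := by omega
  have h1 : lam.beta (n'+1) < b - l := by rw [← hNn']; exact hfind
  have h2 : b - l < lam.beta n' := by
    have hmin : ¬ lam.beta n' < b - l := Nat.find_min hPex (by omega)
    have := hnb n'
    omega
  have hn₀n' : n₀ ≤ n' := by omega
  have ha0 : 0 ≤ b - l + n' + 1 := by
    have := lam.beta_lower (n'+1)
    push_cast at this
    omega
  set t : ℕ := (b - l + n' + 1).toNat with htdef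
  have hta : (t : ℤ) = b - l + n' + 1 := Int.toNat_of_nonneg ha0
  have e1 : (lam.parts n' : ℤ) = lam.beta n' + n' + 1 := hparts n'
  have e2 : (lam.parts (n'+1) : ℤ) = lam.beta (n'+1) + (n' + 1) + 1 := by
    have := hparts (n'+1); push_cast at this ⊢; omega
  have ht1 : lam.parts (n'+1) ≤ t := by
    have : (lam.parts (n'+1) : ℤ) ≤ (t : ℤ) := by omega
    exact_mod_cast this
  have ht2 : t < lam.parts n' := by
    have : (t : ℤ) < (lam.parts n' : ℤ) := by omega
    exact_mod_cast this
  have hq : ∀ r : ℕ, n₀ ≤ r → r < n' → 1 ≤ lam.parts (r+1) := by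
    intro r hr hr'
    have hstep := lam.beta_step (show r + 1 ≤ n' by omega)
    have e3 := hparts (r+1)
    push_cast at e3 hstep
    have : (1 : ℤ) ≤ (lam.parts (r+1) : ℤ) := by omega
    exact_mod_cast this
  have hanti := lam.antitone
  set ν : ℕ → ℕ := nuAux lam.parts n₀ n' t with hνdef
  have hνle : ∀ r, ν r ≤ lam.parts r := nuAux_le hanti hn₀n' ht1 ht2
  have hνlt : ∀ r, n₀ ≤ r → r ≤ n' → ν r < lam.parts r :=
    fun r h h' => nuAux_lt_parts hanti hn₀n' ht1 ht2 h h'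
  have hνsucc : ∀ r, ν (r+1) ≤ ν r := nuAux_succ_le hanti hn₀n' ht1 ht2
  have hν_low : ∀ {r}, r < n₀ → ν r = lam.parts r := fun h => nuAux_lt_of_lt h
  have hν_mid : ∀ {r}, n₀ ≤ r → r < n' → ν r = lam.parts (r+1) - 1 :=
    fun h h' => nuAux_mid h h'
  have hν_top : ν n' = t := nuAux_top hn₀n'
  have hν_gt : ∀ {r}, n' < r → ν r = lam.parts r := fun h => nuAux_gt hn₀n' h
  have hmu_ev : ∃ M : ℕ, ∀ n ≥ M, ν n = 0 := by
    refine ⟨max R (n'+1), fun n hn => ?_⟩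
    rw [hν_gt (show n' < n by
      have := le_max_right R (n'+1); omega)]
    exact hR n (le_trans (le_max_left _ _) hn)
  set mu : Partition' := ⟨ν, nuAux_antitone hanti hn₀n' ht1 ht2, hmu_ev⟩ with hmudef
  set H : Set (ℕ × ℕ) := lam.cells \ mu.cells with hHdef
  have mem_H : ∀ m r : ℕ, ((m,r) ∈ H ↔ ν r ≤ m ∧ m < lam.parts r) := by
    intro m r
    show (m < lam.parts r ∧ ¬ m < ν r) ↔ _
    omega
  have rows_H : ∀ m r : ℕ, (m,r) ∈ H → n₀ ≤ r ∧ r ≤ n' := by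
    intro m r hmr
    rw [mem_H] at hmr
    constructor
    · by_contra h
      rw [hν_low (by omega)] at hmr
      omega
    · by_contra h
      rw [hν_gt (by omega)] at hmr
      omega
  set Hf : Finset (ℕ × ℕ) :=
    (Finset.Icc n₀ n').biUnion
      (fun r => (Finset.Ico (ν r) (lam.parts r)).image (fun m => (m, r))) with hHfdef
  have hHf : H = ↑Hf := by
    ext ⟨m, r⟩
    simp only [hHfdef, Finset.coe_biUnion, Set.mem_iUnion, Finset.mem_coe,
      Finset.mem_image, Finset.mem_Ico, Finset.mem_Icc]
    constructor
    · intro h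
      obtain ⟨hr1, hr2⟩ := rows_H m r h
      rw [mem_H] at h
      exact ⟨r, ⟨hr1, hr2⟩, m, ⟨h.1, h.2⟩, rfl⟩
    · rintro ⟨r', hr', m', hm', heq⟩
      cases heq
      rw [mem_H]
      exact hm'
  have hHfcard : Hf.card = ∑ r ∈ Finset.Icc n₀ n', (lam.parts r - ν r) := by
    rw [hHfdef, Finset.card_biUnion]
    · refine Finset.sum_congr rfl (fun r _ => ?_)
      rw [Finset.card_image_of_injective _ (fun x y hxy => by
        simpa using congrArg Prod.fst hxy), Nat.card_Ico]
    · intro r hr r' hr' hrr'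
      simp only [Finset.disjoint_left, Finset.mem_image, Finset.mem_Ico]
      rintro ⟨m, s⟩ ⟨m1, hm1, heq1⟩ ⟨m2, hm2, heq2⟩
      cases heq1; cases heq2
      exact hrr' rfl
  have hsumZ : (∑ r ∈ Finset.Icc n₀ n', ((lam.parts r : ℤ) - (ν r : ℤ))) = l := by
    rw [← Finset.Ico_add_one_right_eq_Icc, Finset.sum_Ico_succ_top hn₀n']
    have hmid : ∑ r ∈ Finset.Ico n₀ n', ((lam.parts r : ℤ) - (ν r : ℤ)) =
        ∑ r ∈ Finset.Ico n₀ n', (((lam.parts r : ℤ) - (lam.parts (r+1) : ℤ)) + 1) := by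
      refine Finset.sum_congr rfl (fun r hr => ?_)
      rw [Finset.mem_Ico] at hr
      rw [hν_mid hr.1 hr.2]
      have := hq r hr.1 hr.2
      push_cast [Nat.cast_sub this]
      ring
    rw [hmid, Finset.sum_add_distrib, sum_Ico_telescope _ hn₀n', hν_top]
    simp only [Finset.sum_const, Nat.card_Ico, nsmul_eq_mul, mul_one]
    have hbp := hparts n₀
    have hcast : ((n' - n₀ : ℕ) : ℤ) = (n' : ℤ) - (n₀ : ℤ) := by
      push_cast [Nat.cast_sub hn₀n']; ring
    omega
  have hHcard : H.ncard = l := by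
    rw [hHf, Set.ncard_coe_finset]
    have : ((Hf.card : ℤ)) = l := by
      rw [hHfcard]
      push_cast [Nat.cast_sum]
      rw [Finset.sum_congr rfl (fun r _ => by
        rw [Nat.cast_sub (hνle r)] : ∀ r ∈ Finset.Icc n₀ n',
          ((lam.parts r - ν r : ℕ) : ℤ) = (lam.parts r : ℤ) - (ν r : ℤ))]
      exact hsumZ
    exact_mod_cast this
  -- connectivity
  have htbox : (t, n') ∈ H := by
    rw [mem_H, hν_top]
    exact ⟨le_refl t, ht2⟩
  have key : ∀ Nn : ℕ, ∀ m r : ℕ, (m,r) ∈ H → m + (n' - r) = Nn →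
      Relation.ReflTransGen (fun a b => a ∈ H ∧ b ∈ H ∧ Adj a b) (m,r) (t,n') := by
    intro Nn
    induction Nn using Nat.strong_induction_on with
    | _ Nn ih =>
      intro m r hmr hNn
      obtain ⟨hr₀, hr₁⟩ := rows_H m r hmr
      have hmem := (mem_H m r).1 hmr
      rcases Nat.lt_or_ge (ν r) m with hm | hm
      · have hm1 : (m-1, r) ∈ H := by rw [mem_H]; omega
        have hrel : (m,r) ∈ H ∧ (m-1,r) ∈ H ∧ Adj (m,r) (m-1,r) :=
          ⟨hmr, hm1, Or.inr ⟨rfl, Or.inl (by omega)⟩⟩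
        exact Relation.ReflTransGen.head hrel (ih (m - 1 + (n' - r)) (by omega) _ _ hm1 rfl)
      · have hm' : m = ν r := by omega
        rcases Nat.lt_or_ge r n' with hr | hr
        · have hν_r : ν r = lam.parts (r+1) - 1 := hν_mid hr₀ hr
          have hp1 : 1 ≤ lam.parts (r+1) := hq r hr₀ hr
          have hd : (m, r+1) ∈ H := by
            rw [mem_H]
            have := hνsucc r
            omega
          have hrel : (m,r) ∈ H ∧ (m,r+1) ∈ H ∧ Adj (m,r) (m,r+1) :=
            ⟨hmr, hd, Or.inl ⟨rfl, Or.inr rfl⟩⟩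
          exact Relation.ReflTransGen.head hrel (ih (m + (n' - (r+1))) (by omega) _ _ hd rfl)
        · have hrn : r = n' := by omega
          subst hrn
          have hmt : m = t := by rw [hm', hν_top]
          subst hmt
          exact Relation.ReflTransGen.refl
  have hconn : ConnectedIn H := by
    rintro ⟨m, r⟩ hx ⟨m', r'⟩ hy
    have hsymm : Symmetric (fun a b => a ∈ H ∧ b ∈ H ∧ Adj a b) := by
      rintro x y ⟨ha, hb, hc⟩
      exact ⟨hb, ha, by unfold Adj at hc ⊢; tauto⟩
    exact (key _ m r hx rfl).trans (Std.Symm.symm (r := Relation.ReflTransGen (fun a b : ℕ × ℕ => a ∈ H ∧ b ∈ H ∧ Adj a b)) (self := @Relation.ReflTransGen.symmetric _ _ ⟨fun a b h => hsymm h⟩) _ _ (key _ m' r' hy rfl))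
  have hsq : ¬ HasSquare H := by
    rintro ⟨m, n, hA, _hB, hC, hD⟩
    obtain ⟨ha1, _⟩ := rows_H m n hA
    obtain ⟨_, ha4⟩ := rows_H m (n+1) hC
    have hn' : n < n' := by omega
    have hνn : ν n = lam.parts (n+1) - 1 := hν_mid ha1 hn'
    have hmA := (mem_H m n).1 hA
    have hmD := (mem_H (m+1) (n+1)).1 hD
    have hp1 : 1 ≤ lam.parts (n+1) := hq n ha1 hn'
    omega
  have hcells : mu.cells = lam.cells \ H := by
    rw [hHdef]
    ext ⟨m, r⟩
    show m < ν r ↔ (m < lam.parts r ∧ ¬ (m < lam.parts r ∧ ¬ m < ν r))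
    have := hνle r
    omega
  exact ⟨H, Set.diff_subset, hHf ▸ Hf.finite_toSet, hHcard, hconn, hsq, mu, hcells⟩


lemma not_maya_iff (lam : Partition') (x : ℤ) :
    ¬ lam.maya x ↔ ∃ n : ℕ, x = lam.beta n := by
  simp [Partition'.maya, Partition'.beta]

lemma lcore_beta_closed {l : ℕ} (hl : 1 ≤ l) {lam : Partition'} (hcore : IsLCore l lam)
    {x : ℤ} (hx : ∃ n : ℕ, x = lam.beta n) : ∃ n : ℕ, x - l = lam.beta n := by
  by_contra h
  push_neg at h
  obtain ⟨n₀, rfl⟩ := hx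
  exact hcore (exists_rimhook hl lam n₀ h)

lemma lcore_quot_full {l : ℕ} (hl : 1 ≤ l) {lam : Partition'} (hcore : IsLCore l lam)
    (i : ℕ) {p : ℤ} (hp : IsCharge (quotSeq l lam i) p) (k : ℤ) :
    (∃ n : ℕ, (l:ℤ) * k + (i:ℕ) = lam.beta n) ↔ k < p := by
  obtain ⟨h1, h2, h3⟩ := hp
  have hstep : ∀ x : ℤ, ¬ lam.maya (l * x + i) → ¬ lam.maya (l * (x - 1) + i) := by
    intro x hx
    rw [not_maya_iff] at hx ⊢
    obtain ⟨n, hn⟩ := lcore_beta_closed hl hcore hx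
    exact ⟨n, by rw [← hn]; ring⟩
  have hdc : ∀ (d : ℕ) (x : ℤ), ¬ lam.maya (l * x + i) → ¬ lam.maya (l * (x - d) + i) := by
    intro d
    induction d with
    | zero => intro x hx; simpa using hx
    | succ d ih =>
      intro x hx
      have h' := hstep _ (ih x hx)
      have he : (x - (d:ℤ)) - 1 = x - ((d+1 : ℕ) : ℤ) := by push_cast; ring
      rwa [he] at h'
  rw [← not_maya_iff]
  constructor
  · intro hk
    by_contra hkp
    push_neg at hkp
    have hempty : {x : ℤ | x < p ∧ quotSeq l lam i x} = ∅ := by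
      ext x
      simp only [Set.mem_setOf_eq, Set.mem_empty_iff_false, iff_false, not_and]
      intro hxp
      have hd := hdc (k - x).toNat k hk
      have hxk : k - (((k - x).toNat : ℕ) : ℤ) = x := by
        have : ((k - x).toNat : ℤ) = k - x := Int.toNat_of_nonneg (by omega)
        omega
      rw [hxk] at hd
      exact hd
    have hpos : 0 < {x : ℤ | p ≤ x ∧ ¬ quotSeq l lam i x}.ncard := by
      rw [Set.ncard_pos h2]
      exact ⟨k, hkp, hk⟩
    rw [hempty] at h3
    simp at h3
    omega
  · intro hk hS
    have hempty : {x : ℤ | p ≤ x ∧ ¬ quotSeq l lam i x} = ∅ := by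
      ext x
      simp only [Set.mem_setOf_eq, Set.mem_empty_iff_false, iff_false, not_and, not_not]
      intro hxp
      by_contra hxS
      have hd := hdc (x - k).toNat x hxS
      have hxk : x - (((x - k).toNat : ℕ) : ℤ) = k := by
        have : ((x - k).toNat : ℤ) = x - k := Int.toNat_of_nonneg (by omega)
        omega
      rw [hxk] at hd
      exact hd hS
    have hpos : 0 < {x : ℤ | x < p ∧ quotSeq l lam i x}.ncard := by
      rw [Set.ncard_pos h1]
      exact ⟨k, hk, hS⟩
    rw [hempty] at h3
    simp at h3
    omega


lemma diag_card (lam : Partition') {R C R₂ : ℕ}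
    (hR : ∀ n ≥ R, lam.parts n = 0) (hC : ∀ n, lam.parts n ≤ C)
    {d : ℤ} (hRR₂ : R ≤ R₂) (hdR₂ : -(R₂:ℤ) ≤ d) :
    (((Finset.range C) ×ˢ (Finset.range R)).filter
        (fun c => c.1 < lam.parts c.2 ∧ ((c.1:ℤ) - (c.2:ℤ) = d))).card +
      (-d).toNat
      = ((Finset.range R₂).filter (fun n => d ≤ lam.beta n)).card := by
  classical
  have hb : ∀ n : ℕ, lam.beta n = (lam.parts n : ℤ) - ((n:ℤ) + 1) := fun n => rfl
  set G := (Finset.range R₂).filter (fun n => d ≤ lam.beta n) with hG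
  have hsub : Finset.range ((-d).toNat) ⊆ G := by
    intro n hn
    rw [Finset.mem_range] at hn
    have hn' : (n:ℤ) < -d := by omega
    rw [hG, Finset.mem_filter, Finset.mem_range]
    have hbl := lam.beta_lower n
    exact ⟨by omega, by omega⟩
  have key : G.filter (fun n => ¬ ((-d).toNat ≤ n)) = Finset.range ((-d).toNat) := by
    ext n
    rw [Finset.mem_filter, Finset.mem_range]
    simp only [not_le]
    constructor
    · rintro ⟨_, h⟩; exact h
    · intro h
      exact ⟨hsub (Finset.mem_range.2 h), h⟩
  have hsplit := Finset.card_filter_add_card_filter_not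
    (s := G) (p := fun n => ((-d).toNat ≤ n))
  rw [key, Finset.card_range] at hsplit
  have hbij : ((Finset.range C ×ˢ Finset.range R).filter
      (fun c => c.1 < lam.parts c.2 ∧ ((c.1:ℤ) - (c.2:ℤ) = d))).card
      = (G.filter (fun n => (-d).toNat ≤ n)).card := by
    apply Finset.card_bij (fun c _ => c.2)
    · rintro ⟨m, n⟩ hc
      simp only [Finset.mem_filter, Finset.mem_product, Finset.mem_range] at hc
      obtain ⟨⟨hm, hn⟩, hcell, hcont⟩ := hc
      have hbn := hb n
      have hpn : (m:ℤ) < lam.parts n := by exact_mod_cast hcell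
      simp only [Finset.mem_filter, hG, Finset.mem_range]
      exact ⟨⟨by omega, by omega⟩, by omega⟩
    · rintro ⟨m1, n1⟩ h1 ⟨m2, n2⟩ h2 heq
      simp only [Finset.mem_filter, Finset.mem_product, Finset.mem_range] at h1 h2
      obtain ⟨_, _, hc1⟩ := h1
      obtain ⟨_, _, hc2⟩ := h2
      simp only at heq hc1 hc2
      subst heq
      have : m1 = m2 := by omega
      subst this
      rfl
    · intro n hn
      simp only [hG, Finset.mem_filter, Finset.mem_range] at hn
      obtain ⟨⟨hnR₂, hdb⟩, hnd⟩ := hn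
      have hnd' : 0 ≤ (n:ℤ) + d := by omega
      have hbn := hb n
      have hm : ((((n:ℤ) + d).toNat : ℕ) : ℤ) = (n:ℤ) + d := Int.toNat_of_nonneg hnd'
      have hmp : (((((n:ℤ) + d).toNat : ℕ)) : ℤ) < (lam.parts n : ℤ) := by omega
      have hmp' : (((n:ℤ) + d).toNat : ℕ) < lam.parts n := by exact_mod_cast hmp
      have hnR : n < R := by
        by_contra hcon
        have := hR n (by omega)
        omega
      refine ⟨(((n:ℤ) + d).toNat, n), ?_, rfl⟩
      simp only [Finset.mem_filter, Finset.mem_product, Finset.mem_range]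
      refine ⟨⟨?_, hnR⟩, hmp', by omega⟩
      have := hC n
      omega
  omega


lemma G_card {l : ℕ} (hl : 1 ≤ l) (lam : Partition') (p : Fin l → ℤ)
    (hfullB : ∀ (k : ℤ) (i : Fin l),
      (∃ n : ℕ, (l:ℤ) * k + ((i:ℕ):ℤ) = lam.beta n) ↔ k < p i)
    (j : ℕ) (hj : j < l) (k : ℤ) {R₂ : ℕ}
    (hR₂ : ∀ n : ℕ, (l:ℤ)*k - (j:ℤ) ≤ lam.beta n → n < R₂) :
    ((Finset.range R₂).filter (fun n => (l:ℤ)*k - (j:ℤ) ≤ lam.beta n)).card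
      = ∑ i : Fin l, (p i - k + (if l ≤ (i:ℕ) + j then 1 else 0)).toNat := by
  classical
  have hl0 : (0:ℤ) < l := by exact_mod_cast hl
  have hbinj : ∀ {n n' : ℕ}, lam.beta n = lam.beta n' → n = n' := by
    intro n n' h
    rcases Nat.lt_trichotomy n n' with h1 | h1 | h1
    · have := lam.beta_strictAnti h1; omega
    · exact h1
    · have := lam.beta_strictAnti h1; omega
  have hcard : ∑ i : Fin l, (p i - k + (if l ≤ (i:ℕ) + j then (1:ℤ) else 0)).toNat
      = (Finset.univ.sigma
          (fun i : Fin l => Finset.Ico (k - (if l ≤ (i:ℕ) + j then (1:ℤ) else 0)) (p i))).card := by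
    rw [Finset.card_sigma]
    refine Finset.sum_congr rfl (fun i _ => ?_)
    rw [Int.card_Ico]
    congr 1
    ring
  rw [hcard]
  apply Finset.card_bij
    (fun n _ => (⟨⟨(lam.beta n % l).toNat, by
        have h1 := Int.emod_lt_of_pos (lam.beta n) hl0
        have h2 := Int.emod_nonneg (lam.beta n) (ne_of_gt hl0)
        omega⟩, lam.beta n / l⟩ : Σ _ : Fin l, ℤ))
  · intro n hn
    rw [Finset.mem_filter, Finset.mem_range] at hn
    obtain ⟨hnR₂, hd⟩ := hn
    have hx : (l:ℤ) * (lam.beta n / l) + lam.beta n % l = lam.beta n :=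
      Int.mul_ediv_add_emod _ _
    have h0 : 0 ≤ lam.beta n % l := Int.emod_nonneg _ (ne_of_gt hl0)
    have h1 : lam.beta n % l < l := Int.emod_lt_of_pos _ hl0
    have hival : (((lam.beta n % l).toNat : ℕ) : ℤ) = lam.beta n % l :=
      Int.toNat_of_nonneg h0
    rw [Finset.mem_sigma]
    refine ⟨Finset.mem_univ _, ?_⟩
    rw [Finset.mem_Ico]
    constructor
    · -- lower bound
      by_cases hc : l ≤ (lam.beta n % l).toNat + j
      · simp only [hc, if_true]
        by_contra hq
        push_neg at hq  -- beta n / l < k - 1, i.e. ≤ k - 2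
        have hmul : (l:ℤ) * (lam.beta n / l) ≤ l * (k - 2) :=
          Int.mul_le_mul_of_nonneg_left (by omega) (le_of_lt hl0)
        have hring : (l:ℤ) * (k - 2) = l * k - 2 * l := by ring
        omega
      · simp only [hc, if_false]
        by_contra hq
        push_neg at hq
        have hmul : (l:ℤ) * (lam.beta n / l) ≤ l * (k - 1) :=
          Int.mul_le_mul_of_nonneg_left (by omega) (le_of_lt hl0)
        have hring : (l:ℤ) * (k - 1) = l * k - l := by ring
        omega
    · -- upper bound: via hfullB
      apply (hfullB (lam.beta n / l) _).1
      exact ⟨n, by rw [hival]; exact hx⟩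
  · -- injectivity
    intro n hn n' hn' heq
    have h1 := congrArg (fun s : (Σ _ : Fin l, ℤ) => ((s.1 : ℕ) : ℤ)) heq
    have h2 := congrArg (fun s : (Σ _ : Fin l, ℤ) => s.2) heq
    simp only at h1 h2
    have e0 : 0 ≤ lam.beta n % l := Int.emod_nonneg _ (ne_of_gt hl0)
    have e0' : 0 ≤ lam.beta n' % l := Int.emod_nonneg _ (ne_of_gt hl0)
    have hx : (l:ℤ) * (lam.beta n / l) + lam.beta n % l = lam.beta n :=
      Int.mul_ediv_add_emod _ _
    have hx' : (l:ℤ) * (lam.beta n' / l) + lam.beta n' % l = lam.beta n' :=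
      Int.mul_ediv_add_emod _ _
    have hmodeq : lam.beta n % l = lam.beta n' % l := by omega
    apply hbinj
    rw [← hx, ← hx', h2, hmodeq]
  · -- surjectivity
    rintro ⟨i, q⟩ hmem
    rw [Finset.mem_sigma, Finset.mem_Ico] at hmem
    obtain ⟨-, hq1, hq2⟩ := hmem
    obtain ⟨n, hn⟩ := (hfullB q i).2 hq2
    have hil : ((i:ℕ):ℤ) < l := by exact_mod_cast i.isLt
    have hi0 : (0:ℤ) ≤ ((i:ℕ):ℤ) := Int.natCast_nonneg _
    have hd : (l:ℤ)*k - (j:ℤ) ≤ lam.beta n := by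
      rw [← hn]
      by_cases hc : l ≤ (i:ℕ) + j
      · simp only [hc, if_true] at hq1
        have hmul : (l:ℤ) * (k - 1) ≤ l * q :=
          Int.mul_le_mul_of_nonneg_left hq1 (le_of_lt hl0)
        have hring : (l:ℤ) * (k - 1) = l * k - l := by ring
        have hcz : (l:ℤ) ≤ (i:ℕ) + (j:ℤ) := by exact_mod_cast hc
        omega
      · simp only [hc, if_false] at hq1
        have hmul : (l:ℤ) * k ≤ l * q :=
          Int.mul_le_mul_of_nonneg_left (by omega) (le_of_lt hl0)
        omega
    refine ⟨n, ?_, ?_⟩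
    · rw [Finset.mem_filter, Finset.mem_range]
      exact ⟨hR₂ n hd, hd⟩
    · -- the map sends n to ⟨i, q⟩
      have hmod : lam.beta n % l = ((i:ℕ):ℤ) := by
        rw [← hn]
        rw [show (l:ℤ) * q + ((i:ℕ):ℤ) = ((i:ℕ):ℤ) + q * l by ring]
        rw [Int.add_mul_emod_self_right]
        exact Int.emod_eq_of_lt hi0 hil
      have hdiv : lam.beta n / l = q := by
        rw [← hn]
        rw [show (l:ℤ) * q + ((i:ℕ):ℤ) = ((i:ℕ):ℤ) + q * l by ring]
        rw [Int.add_mul_ediv_right _ _ (ne_of_gt hl0)]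
        rw [Int.ediv_eq_zero_of_lt hi0 hil]
        ring
      refine Sigma.ext ?_ (heq_of_eq ?_)
      · apply Fin.ext
        show (lam.beta n % l).toNat = (i:ℕ)
        rw [hmod]
        simp
      · show lam.beta n / l = q
        exact hdiv


lemma sum_toNat_Icc {a b : ℤ} (ha : a ≤ 0) (hb : 0 ≤ b) :
    ∑ x ∈ Finset.Icc a b, ((x.toNat : ℚ)) = (b * (b+1)) / 2 := by
  have hsub : Finset.Icc (0:ℤ) b ⊆ Finset.Icc a b :=
    Finset.Icc_subset_Icc ha (le_refl b)
  rw [← Finset.sum_subset hsub (fun x hx hnx => by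
    rw [Finset.mem_Icc] at hx hnx
    push_neg at hnx
    have h0 : x.toNat = 0 := by omega
    simp [h0])]
  have hrw : ∑ x ∈ Finset.Icc (0:ℤ) b, ((x.toNat : ℚ))
      = ∑ n ∈ Finset.range (b.toNat + 1), (n : ℚ) := by
    apply Finset.sum_nbij' (i := fun x : ℤ => x.toNat) (j := fun n : ℕ => (n:ℤ))
    · intro x hx
      rw [Finset.mem_Icc] at hx
      rw [Finset.mem_range]
      omega
    · intro n hn
      rw [Finset.mem_range] at hn
      rw [Finset.mem_Icc]
      omega
    · intro x hx
      rw [Finset.mem_Icc] at hx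
      omega
    · intro n _
      simp
    · intro x _
      rfl
  rw [hrw]
  have hg := Finset.sum_range_id_mul_two (b.toNat + 1)
  have hcast : (∑ n ∈ Finset.range (b.toNat + 1), (n:ℚ))
      = ((∑ n ∈ Finset.range (b.toNat + 1), n : ℕ) : ℚ) := by
    push_cast
    rfl
  have hbq : ((b.toNat : ℕ) : ℚ) = (b : ℚ) := by
    have := Int.toNat_of_nonneg hb
    exact_mod_cast congrArg (fun z : ℤ => (z : ℚ)) this
  have hgq : (∑ n ∈ Finset.range (b.toNat + 1), (n:ℚ)) * 2
      = (b.toNat + 1) * b.toNat := by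
    rw [hcast]
    rw [show ((∑ n ∈ Finset.range (b.toNat + 1), n : ℕ) : ℚ) * 2
        = (((∑ n ∈ Finset.range (b.toNat + 1), n) * 2 : ℕ) : ℚ) by push_cast; ring]
    rw [hg]
    push_cast
    ring
  rw [hbq] at hgq
  linarith

lemma sum_toNat_shift (p e M : ℤ) (hM : 0 ≤ M) (h1 : -M ≤ p + e) (h2 : p + e ≤ M) :
    ∑ k ∈ Finset.Icc (-M) M, (((p - k + e).toNat : ℚ))
      = ((p + M + e) * (p + M + e + 1)) / 2 := by
  have hrw : ∑ k ∈ Finset.Icc (-M) M, (((p - k + e).toNat : ℚ))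
      = ∑ x ∈ Finset.Icc (p + e - M) (p + e + M), ((x.toNat : ℚ)) := by
    apply Finset.sum_nbij' (i := fun k : ℤ => p + e - k) (j := fun x : ℤ => p + e - x)
    · intro x hx; rw [Finset.mem_Icc] at hx ⊢; omega
    · intro x hx; rw [Finset.mem_Icc] at hx ⊢; omega
    · intro x _; ring
    · intro x _; ring
    · intro x _
      congr 2
      ring
  rw [hrw, sum_toNat_Icc (by omega) (by omega)]
  push_cast
  ring

lemma sum_baseline {j l : ℕ} (M : ℕ) (hj : j < l) :
    ∑ k ∈ Finset.Icc (-(M:ℤ)) (M:ℤ), (((j:ℤ) - (l:ℤ)*k).toNat : ℚ)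
      = ((M:ℚ)+1)*(j:ℚ) + (l:ℚ)*((M:ℚ)*((M:ℚ)+1))/2 := by
  have hsub : Finset.Icc (-(M:ℤ)) (0:ℤ) ⊆ Finset.Icc (-(M:ℤ)) (M:ℤ) :=
    Finset.Icc_subset_Icc (le_refl _) (by positivity)
  rw [← Finset.sum_subset hsub (fun k hk hnk => by
    rw [Finset.mem_Icc] at hk hnk
    push_neg at hnk
    have hk1 : 1 ≤ k := by omega
    have hmul : (l:ℤ) * 1 ≤ l * k :=
      Int.mul_le_mul_of_nonneg_left hk1 (by positivity)
    have h0 : ((j:ℤ) - l*k).toNat = 0 := by omega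
    simp [h0])]
  have hrw : ∑ k ∈ Finset.Icc (-(M:ℤ)) (0:ℤ), (((j:ℤ) - (l:ℤ)*k).toNat : ℚ)
      = ∑ x ∈ Finset.Icc (0:ℤ) (M:ℤ), (((j:ℤ) + (l:ℤ)*x).toNat : ℚ) := by
    apply Finset.sum_nbij' (i := fun k : ℤ => -k) (j := fun x : ℤ => -x)
    · intro x hx; rw [Finset.mem_Icc] at hx ⊢; omega
    · intro x hx; rw [Finset.mem_Icc] at hx ⊢; omega
    · intro x _; ring
    · intro x _; ring
    · intro x _
      congr 2
      ring
  rw [hrw]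
  have hterm : ∀ x ∈ Finset.Icc (0:ℤ) (M:ℤ),
      (((j:ℤ) + (l:ℤ)*x).toNat : ℚ) = (j:ℚ) + (l:ℚ) * ((x.toNat : ℚ)) := by
    intro x hx
    rw [Finset.mem_Icc] at hx
    have hx0 : 0 ≤ x := hx.1
    have hlx : 0 ≤ (l:ℤ) * x := by positivity
    have h1 : (((j:ℤ) + (l:ℤ)*x).toNat : ℤ) = (j:ℤ) + (l:ℤ)*x :=
      Int.toNat_of_nonneg (by omega)
    have h2 : ((x.toNat : ℕ) : ℤ) = x := Int.toNat_of_nonneg hx0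
    have : (((j:ℤ) + (l:ℤ)*x).toNat : ℚ) = ((j:ℚ) + (l:ℚ)*((x.toNat : ℕ) : ℚ)) := by
      exact_mod_cast congrArg (fun z : ℤ => (z:ℚ)) (by rw [h1, h2] :
        (((j:ℤ) + (l:ℤ)*x).toNat : ℤ) = (j:ℤ) + (l:ℤ) * ((x.toNat : ℕ) : ℤ))
    rw [this]
  rw [Finset.sum_congr rfl hterm, Finset.sum_add_distrib, ← Finset.mul_sum,
    sum_toNat_Icc (le_refl 0) (by positivity), Finset.sum_const, Int.card_Icc]
  have : ((M:ℤ) + 1 - 0).toNat = M + 1 := by omega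
  rw [this]
  push_cast
  ring

lemma card_filter_ge {l : ℕ} (j : ℕ) (hj : j < l) :
    (Finset.univ.filter (fun i : Fin l => l ≤ (i:ℕ) + j)).card = j := by
  have h : (Finset.univ.filter (fun i : Fin l => l ≤ (i:ℕ) + j)).card
      = (Finset.range j).card := by
    apply Finset.card_bij (fun (i : Fin l) _ => (i:ℕ) + j - l)
    · intro i hi
      rw [Finset.mem_filter] at hi
      rw [Finset.mem_range]
      have := i.isLt
      omega
    · intro i hi i' hi' heq
      rw [Finset.mem_filter] at hi hi'
      apply Fin.ext
      omega
    · intro b hb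
      rw [Finset.mem_range] at hb
      refine ⟨⟨b + l - j, by omega⟩, ?_, ?_⟩
      · rw [Finset.mem_filter]
        refine ⟨Finset.mem_univ _, ?_⟩
        show l ≤ (b + l - j) + j
        omega
      · show (b + l - j) + j - l = b
        omega
  rw [h, Finset.card_range]


lemma sum_p_zero {l : ℕ} (hl : 1 ≤ l) (lam : Partition') (p : Fin l → ℤ)
    (hfullB : ∀ (k : ℤ) (i : Fin l),
      (∃ n : ℕ, (l:ℤ) * k + ((i:ℕ):ℤ) = lam.beta n) ↔ k < p i) :
    ∑ i, p i = 0 := by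
  obtain ⟨R, hR⟩ := lam.eventually_zero
  set M₀ : ℕ := R + (∑ i, (p i).natAbs) + 1 with hM₀def
  have hpM₀ : ∀ i : Fin l, (p i).natAbs < M₀ := by
    intro i
    have h : (p i).natAbs ≤ ∑ i, (p i).natAbs := by
      simpa using Finset.single_le_sum (f := fun i : Fin l => (p i).natAbs)
        (fun i _ => Nat.zero_le _) (Finset.mem_univ i)
    omega
  have h0l : (0:ℕ) < l := hl
  have hMM : M₀ ≤ l * M₀ := Nat.le_mul_of_pos_left M₀ h0l
  set R₂ : ℕ := R + l*M₀ + 1 with hR₂def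
  have hcastlM : ((l*M₀ : ℕ) : ℤ) = (l:ℤ)*(M₀:ℤ) := by push_cast; ring
  have hR₂cond : ∀ n : ℕ, (l:ℤ)*(-(M₀:ℤ)) - ((0:ℕ):ℤ) ≤ lam.beta n → n < R₂ := by
    intro n hn
    by_contra hcon
    push_neg at hcon
    have h0 : lam.parts n = 0 := hR n (by omega)
    have hb : lam.beta n = -((n:ℤ)+1) := by
      unfold Partition'.beta
      rw [h0]
      push_cast
      ring
    rw [hb] at hn
    have hmul : (l:ℤ)*(-(M₀:ℤ)) = -((l:ℤ)*(M₀:ℤ)) := by ring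
    omega
  have hcount := G_card hl lam p hfullB 0 h0l (-(M₀:ℤ)) hR₂cond
  have hset : (Finset.range R₂).filter
        (fun n => (l:ℤ)*(-(M₀:ℤ)) - ((0:ℕ):ℤ) ≤ lam.beta n)
      = Finset.range (l*M₀) := by
    ext n
    rw [Finset.mem_filter, Finset.mem_range, Finset.mem_range]
    have hmul : (l:ℤ)*(-(M₀:ℤ)) = -((l:ℤ)*(M₀:ℤ)) := by ring
    constructor
    · rintro ⟨hnR₂, hn⟩
      by_contra hcon
      push_neg at hcon
      have h0 : lam.parts n = 0 := hR n (by omega)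
      have hb : lam.beta n = -((n:ℤ)+1) := by
        unfold Partition'.beta
        rw [h0]
        push_cast
        ring
      omega
    · intro hn
      have hbl := lam.beta_lower n
      exact ⟨by omega, by omega⟩
  rw [hset, Finset.card_range] at hcount
  have hterm : ∀ i : Fin l,
      (((p i - (-(M₀:ℤ)) + if l ≤ (i:ℕ) + 0 then (1:ℤ) else 0).toNat : ℕ) : ℤ)
      = p i + (M₀:ℤ) := by
    intro i
    have hil := i.isLt
    have hif : (if l ≤ (i:ℕ) + 0 then (1:ℤ) else 0) = 0 := by
      rw [if_neg]
      omega
    rw [hif]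
    have hna := hpM₀ i
    rw [Int.toNat_of_nonneg (by omega)]
    ring
  have hZ : ((l*M₀ : ℕ) : ℤ) = ∑ i : Fin l, (p i + (M₀:ℤ)) := by
    rw [hcount, Nat.cast_sum]
    exact Finset.sum_congr rfl (fun i _ => hterm i)
  rw [Finset.sum_add_distrib, Finset.sum_const, Finset.card_univ, Fintype.card_fin,
    nsmul_eq_mul, hcastlM] at hZ
  linarith

/-- Let `l ≥ 2` and let `λ` be an `l`-core with quotient charges `p_i`.
Then for every `0 ≤ j ≤ l−1`, the number of boxes of `λ` of content `≡ −j (mod l)` equals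
`(1/2)·∑_{i=0}^{l−1} p_i² + ∑_{i=l−j}^{l−1} p_i` (the second sum empty when `j = 0`). -/
theorem lcore_content_count_formula (l : ℕ) (hl : 2 ≤ l) (lam : Partition')
    (hcore : IsLCore l lam)
    (p : Fin l → ℤ) (hp : ∀ i : Fin l, IsCharge (quotSeq l lam i) (p i))
    (j : ℕ) (hj : j < l) :
    (contentCount l lam (-(j : ℤ)) : ℚ) =
      (∑ i, (p i : ℚ) ^ 2) / 2 +
        ∑ i ∈ Finset.univ.filter (fun i : Fin l => l - j ≤ (i : ℕ)), (p i : ℚ) := by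
  classical
  obtain ⟨R, hR⟩ := lam.eventually_zero
  have hl1 : 1 ≤ l := by omega
  have hl0 : (0:ℤ) < (l:ℤ) := by exact_mod_cast hl1
  have hfull : ∀ (k : ℤ) (i : Fin l),
      (∃ n : ℕ, (l:ℤ) * k + ((i:ℕ):ℤ) = lam.beta n) ↔ k < p i :=
    fun k i => lcore_quot_full hl1 hcore (i:ℕ) (hp i) k
  have hsump : ∑ i, p i = 0 := sum_p_zero hl1 lam p hfull
  set C : ℕ := lam.parts 0 + 1 with hCdef
  have hCb : ∀ n, lam.parts n < C := fun n => by
    have := lam.antitone (Nat.zero_le n)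
    omega
  set M : ℕ := R + C + j + (∑ i, (p i).natAbs) + 2 with hMdef
  have hpM : ∀ i : Fin l, (p i).natAbs + 2 ≤ M := by
    intro i
    have h : (p i).natAbs ≤ ∑ i, (p i).natAbs := by
      simpa using Finset.single_le_sum (f := fun i : Fin l => (p i).natAbs)
        (fun i _ => Nat.zero_le _) (Finset.mem_univ i)
    omega
  have hMlM : M ≤ l * M := Nat.le_mul_of_pos_left M hl1
  have hlM1 : C + j ≤ l * M := by omega
  have hlM2 : R ≤ l * M := by omega
  set R₂ : ℕ := R + l*M + j + 1 with hR₂def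
  have hcastlM : ((l*M : ℕ) : ℤ) = (l:ℤ)*(M:ℤ) := by push_cast; ring
  have hR₂cast : ((R₂:ℕ):ℤ) = (R:ℤ) + (l:ℤ)*(M:ℤ) + (j:ℤ) + 1 := by
    rw [hR₂def]; push_cast; ring
  have hlMZ1 : (C:ℤ) + (j:ℤ) ≤ (l:ℤ)*(M:ℤ) := by
    have : ((C + j : ℕ) : ℤ) ≤ ((l*M : ℕ) : ℤ) := by exact_mod_cast hlM1
    push_cast at this
    omega
  have hlMZ2 : (R:ℤ) ≤ (l:ℤ)*(M:ℤ) := by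
    have : ((R : ℕ) : ℤ) ≤ ((l*M : ℕ) : ℤ) := by exact_mod_cast hlM2
    push_cast at this
    omega
  set F : Finset (ℕ × ℕ) := ((Finset.range C) ×ˢ (Finset.range R)).filter
    (fun c => c.1 < lam.parts c.2 ∧ ((c.1:ℤ) - (c.2:ℤ)) ≡ -(j:ℤ) [ZMOD (l:ℤ)]) with hFdef
  clear_value C M R₂ F
  have hstep1 : contentCount l lam (-(j:ℤ)) = F.card := by
    unfold contentCount
    rw [← Set.ncard_coe_finset]
    congr 1
    ext ⟨m, n⟩
    simp only [hFdef, Finset.coe_filter, Finset.mem_product, Finset.mem_range,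
      Set.mem_setOf_eq, Partition'.cells]
    constructor
    · rintro ⟨hcell, hmod⟩
      have h1 : m < lam.parts n := hcell
      have h2 : n < R := by
        by_contra hcon
        push_neg at hcon
        have := hR n hcon
        omega
      exact ⟨⟨by have := hCb n; omega, h2⟩, h1, hmod⟩
    · rintro ⟨_, h1, hmod⟩
      exact ⟨h1, hmod⟩
  have hdvd : ∀ c : ℕ × ℕ, ((((c.1:ℤ) - (c.2:ℤ)) ≡ -(j:ℤ) [ZMOD (l:ℤ)]) ↔
      ∃ k : ℤ, (c.1:ℤ) - (c.2:ℤ) = (l:ℤ)*k - (j:ℤ)) := by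
    intro c
    rw [Int.modEq_iff_dvd]
    constructor
    · rintro ⟨k, hk⟩
      refine ⟨-k, ?_⟩
      have : (l:ℤ)*(-k) = -((l:ℤ)*k) := by ring
      omega
    · rintro ⟨k, hk⟩
      refine ⟨-k, ?_⟩
      have : (l:ℤ)*(-k) = -((l:ℤ)*k) := by ring
      omega
  have hfval : ∀ (c : ℕ × ℕ) (k : ℤ), ((c.1:ℤ) - (c.2:ℤ) = (l:ℤ)*k - (j:ℤ)) →
      ((c.1:ℤ) - (c.2:ℤ) + (j:ℤ)) / (l:ℤ) = k := by
    intro c k hc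
    rw [hc, show (l:ℤ)*k - (j:ℤ) + (j:ℤ) = (l:ℤ)*k by ring]
    exact Int.mul_ediv_cancel_left k (ne_of_gt hl0)
  have hbound : ∀ c ∈ F, ((c.1:ℤ) - (c.2:ℤ) + (j:ℤ)) / (l:ℤ) ∈ Finset.Icc (-(M:ℤ)) (M:ℤ) := by
    rintro ⟨m, n⟩ hc
    rw [hFdef, Finset.mem_filter, Finset.mem_product, Finset.mem_range, Finset.mem_range] at hc
    obtain ⟨⟨hm, hn⟩, _, hmod⟩ := hc
    obtain ⟨k, hk⟩ := (hdvd (m, n)).1 hmod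
    simp only at hk
    rw [hfval (m, n) k hk, Finset.mem_Icc]
    constructor
    · by_contra hcon
      push_neg at hcon
      have hmul : (l:ℤ)*k ≤ (l:ℤ)*(-(M:ℤ)-1) :=
        Int.mul_le_mul_of_nonneg_left (by omega) (le_of_lt hl0)
      have hring : (l:ℤ)*(-(M:ℤ)-1) = -((l:ℤ)*(M:ℤ)) - (l:ℤ) := by ring
      omega
    · by_contra hcon
      push_neg at hcon
      have hmul : (l:ℤ)*((M:ℤ)+1) ≤ (l:ℤ)*k :=
        Int.mul_le_mul_of_nonneg_left (by omega) (le_of_lt hl0)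
      have hring : (l:ℤ)*((M:ℤ)+1) = (l:ℤ)*(M:ℤ) + (l:ℤ) := by ring
      omega
  have hstep2 := Finset.card_eq_sum_card_fiberwise hbound
  have hfiber : ∀ k : ℤ, F.filter (fun c => ((c.1:ℤ) - (c.2:ℤ) + (j:ℤ)) / (l:ℤ) = k)
      = ((Finset.range C) ×ˢ (Finset.range R)).filter
          (fun c => c.1 < lam.parts c.2 ∧ ((c.1:ℤ) - (c.2:ℤ) = (l:ℤ)*k - (j:ℤ))) := by
    intro k
    ext ⟨m, n⟩
    rw [Finset.mem_filter, hFdef, Finset.mem_filter, Finset.mem_filter]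
    constructor
    · rintro ⟨⟨hmn, hcell, hmod⟩, hfc⟩
      obtain ⟨k', hk'⟩ := (hdvd (m,n)).1 hmod
      simp only at hk' hfc ⊢
      have hv := hfval (m,n) k' hk'
      simp only at hv
      have hkk : k' = k := by rw [← hfc, hv]
      exact ⟨hmn, hcell, by rw [hk', hkk]⟩
    · rintro ⟨hmn, hcell, hk⟩
      simp only at hk ⊢
      have hv := hfval (m,n) k hk
      simp only at hv
      exact ⟨⟨hmn, hcell, (hdvd (m,n)).2 ⟨k, hk⟩⟩, hv⟩
  have hR₂cond : ∀ k : ℤ, -(M:ℤ) ≤ k → ∀ n : ℕ, (l:ℤ)*k - (j:ℤ) ≤ lam.beta n → n < R₂ := by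
    intro k hk n hbn
    by_contra hcon
    push_neg at hcon
    have h0 : lam.parts n = 0 := hR n (by omega)
    have hb : lam.beta n = -((n:ℤ)+1) := by
      unfold Partition'.beta
      rw [h0]
      push_cast
      ring
    have hmul : (l:ℤ)*(-(M:ℤ)) ≤ (l:ℤ)*k := Int.mul_le_mul_of_nonneg_left hk (le_of_lt hl0)
    have hring : (l:ℤ)*(-(M:ℤ)) = -((l:ℤ)*(M:ℤ)) := by ring
    omega
  have hperk : ∀ k ∈ Finset.Icc (-(M:ℤ)) (M:ℤ),
      ((F.filter (fun c => ((c.1:ℤ) - (c.2:ℤ) + (j:ℤ)) / (l:ℤ) = k)).card : ℚ)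
      = (∑ i : Fin l, (((p i - k + (if l ≤ (i:ℕ) + j then (1:ℤ) else 0)).toNat : ℕ) : ℚ))
        - ((((j:ℤ) - (l:ℤ)*k).toNat : ℕ) : ℚ) := by
    intro k hk
    rw [Finset.mem_Icc] at hk
    rw [hfiber k]
    have hbd : -((R₂:ℕ):ℤ) ≤ (l:ℤ)*k - (j:ℤ) := by
      have hmul : (l:ℤ)*(-(M:ℤ)) ≤ (l:ℤ)*k := Int.mul_le_mul_of_nonneg_left hk.1 (le_of_lt hl0)
      have hring : (l:ℤ)*(-(M:ℤ)) = -((l:ℤ)*(M:ℤ)) := by ring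
      omega
    have hd1 := diag_card lam hR (fun n => le_of_lt (hCb n)) (d := (l:ℤ)*k - (j:ℤ))
      (show R ≤ R₂ by omega) hbd
    have hd2 := G_card hl1 lam p hfull j hj k (hR₂cond k hk.1)
    rw [hd2] at hd1
    have hneg : (-((l:ℤ)*k - (j:ℤ))).toNat = ((j:ℤ) - (l:ℤ)*k).toNat := by
      congr 1
      ring
    rw [hneg] at hd1
    have hq := congrArg (fun x : ℕ => (x : ℚ)) hd1
    push_cast at hq
    push_cast
    linarith
  have hchain : (contentCount l lam (-(j:ℤ)) : ℚ)
      = ∑ k ∈ Finset.Icc (-(M:ℤ)) (M:ℤ),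
          ((∑ i : Fin l, (((p i - k + (if l ≤ (i:ℕ) + j then (1:ℤ) else 0)).toNat : ℕ) : ℚ))
            - ((((j:ℤ) - (l:ℤ)*k).toNat : ℕ) : ℚ)) := by
    rw [hstep1, hstep2, Nat.cast_sum]
    exact Finset.sum_congr rfl hperk
  rw [hchain, Finset.sum_sub_distrib, Finset.sum_comm, sum_baseline M hj]
  have hsums : ∑ i : Fin l, (∑ k ∈ Finset.Icc (-(M:ℤ)) (M:ℤ),
      (((p i - k + (if l ≤ (i:ℕ) + j then (1:ℤ) else 0)).toNat : ℕ) : ℚ))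
      = ∑ i : Fin l, ((p i:ℚ)^2/2 + ((M:ℚ)^2+(M:ℚ))/2 + (p i:ℚ)*((2*(M:ℚ)+1)/2)
          + (if l ≤ (i:ℕ) + j then ((p i:ℚ) + (M:ℚ) + 1) else 0)) := by
    refine Finset.sum_congr rfl (fun i _ => ?_)
    have hna := hpM i
    rw [sum_toNat_shift (p i) (if l ≤ (i:ℕ) + j then (1:ℤ) else 0) (M:ℤ)
      (by positivity) (by split_ifs <;> omega) (by split_ifs <;> omega)]
    by_cases hc : l ≤ (i:ℕ) + j
    · simp only [hc, if_true]
      push_cast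
      ring
    · simp only [hc, if_false]
      push_cast
      ring
  rw [hsums, Finset.sum_add_distrib, Finset.sum_add_distrib, Finset.sum_add_distrib]
  have h1 : ∑ i : Fin l, (p i:ℚ)^2/2 = (∑ i, (p i : ℚ)^2)/2 := by
    rw [Finset.sum_div]
  have h2 : ∑ _i : Fin l, ((M:ℚ)^2+(M:ℚ))/2 = (l:ℚ) * (((M:ℚ)^2+(M:ℚ))/2) := by
    rw [Finset.sum_const, Finset.card_univ, Fintype.card_fin, nsmul_eq_mul]
  have hps : ∑ i : Fin l, (p i:ℚ) = 0 := by
    have : ((∑ i, p i : ℤ) : ℚ) = 0 := by rw [hsump]; norm_num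
    push_cast at this
    exact this
  have h3 : ∑ i : Fin l, (p i:ℚ)*((2*(M:ℚ)+1)/2) = 0 := by
    rw [← Finset.sum_mul, hps, zero_mul]
  have h4 : ∑ i : Fin l, (if l ≤ (i:ℕ) + j then ((p i:ℚ) + (M:ℚ) + 1) else 0)
      = (∑ i ∈ Finset.univ.filter (fun i : Fin l => l ≤ (i:ℕ) + j), (p i:ℚ))
        + ((M:ℚ)+1)*(j:ℚ) := by
    rw [← Finset.sum_filter, Finset.sum_add_distrib, Finset.sum_add_distrib,
      Finset.sum_const, Finset.sum_const, card_filter_ge j hj, nsmul_eq_mul, nsmul_eq_mul]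
    ring
  have hfilt : Finset.univ.filter (fun i : Fin l => l - j ≤ (i:ℕ))
      = Finset.univ.filter (fun i : Fin l => l ≤ (i:ℕ) + j) := by
    ext i
    simp only [Finset.mem_filter, Finset.mem_univ, true_and]
    omega
  rw [h1, h2, h3, h4, hfilt]
  have hring : (l:ℚ)*((M:ℚ)*((M:ℚ)+1))/2 = (l:ℚ)*(((M:ℚ)^2+(M:ℚ))/2) := by ring
  linarith
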